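/- Let H be a Hilbert space and let M, N be closed subspaces of H with M + N not closed. Let p, q be the orthogonal projections onto M and N. Then the right-ideal sum pB(H) + qB(H) is not a closed subspace of B(H). -/

import Mathlib

/-- If `M, N` are closed subspaces of a Hilbert space `H` with `M + N` not
closed, and `p, q` are the orthogonal projections onto `M` and `N`, then the right-ideal sum
`pB(H) + qB(H)` is not a closed subspace of `B(H)`. -/
theorem right_ideal_sum_not_closed
    {H : Type*} [NormedAddCommGroup H] [InnerProductSpace ℂ H] [CompleteSpace H]
    (M N : Submodule ℂ H) [CompleteSpace M] [CompleteSpace N]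
    (hMN : ¬ IsClosed ((M ⊔ N : Submodule ℂ H) : Set H)) :
    ¬ IsClosed {R : H →L[ℂ] H | ∃ T T' : H →L[ℂ] H,
        R = (M.subtypeL.comp (M.orthogonalProjectionOnto)).comp T +
            (N.subtypeL.comp (N.orthogonalProjectionOnto)).comp T'} := by
  intro hcl
  apply hMN
  set P : H →L[ℂ] H := M.subtypeL.comp (M.orthogonalProjectionOnto) with hP
  set Q : H →L[ℂ] H := N.subtypeL.comp (N.orthogonalProjectionOnto) with hQ
  set S : Set (H →L[ℂ] H) := {R : H →L[ℂ] H | ∃ T T' : H →L[ℂ] H,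
      R = P.comp T + Q.comp T'} with hS
  -- nonzero vector
  obtain ⟨x0, hx0⟩ : ∃ x : H, x ≠ 0 := by
    by_contra h
    push_neg at h
    apply hMN
    have : ((M ⊔ N : Submodule ℂ H) : Set H) = {0} := by
      ext y; simp [h y]
    rw [this]; exact isClosed_singleton
  set e : H := ‖x0‖⁻¹ • x0 with he
  have hne : ‖e‖ = 1 := norm_smul_inv_norm hx0
  have hee : (inner ℂ e e : ℂ) = 1 := by
    rw [inner_self_eq_norm_sq_to_K, hne]; norm_num
  set ψ : H →L[ℂ] (H →L[ℂ] H) :=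
    ContinuousLinearMap.smulRightL ℂ H H (innerSL ℂ e) with hψ
  have hψapp : ∀ x y : H, ψ x y = (inner ℂ e y : ℂ) • x := fun x y => rfl
  have hPfix : ∀ m ∈ M, P m = m := by
    intro m hm
    show ((M.orthogonalProjectionOnto m : M) : H) = m
    exact congrArg Subtype.val (M.orthogonalProjectionOnto_mem_subspace_eq_self ⟨m, hm⟩)
  have hQfix : ∀ n ∈ N, Q n = n := by
    intro n hn
    show ((N.orthogonalProjectionOnto n : N) : H) = n
    exact congrArg Subtype.val (N.orthogonalProjectionOnto_mem_subspace_eq_self ⟨n, hn⟩)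
  have hmaps : Set.MapsTo ψ ((M ⊔ N : Submodule ℂ H) : Set H) S := by
    intro x hx
    obtain ⟨m, hm, n, hn, rfl⟩ := Submodule.mem_sup.mp hx
    refine ⟨ψ m, ψ n, ?_⟩
    ext y
    simp only [ContinuousLinearMap.add_apply, ContinuousLinearMap.comp_apply, hψapp,
      smul_add, map_smul]
    rw [hPfix m hm, hQfix n hn]
  apply isClosed_of_closure_subset
  intro x hx
  have hmem : ψ x ∈ S :=
    hcl.closure_subset (map_mem_closure ψ.continuous hx hmaps)
  obtain ⟨T, T', hTT⟩ := hmem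
  have hx' : x = P (T e) + Q (T' e) := by
    have := congrArg (fun R : H →L[ℂ] H => R e) hTT
    simpa [hψapp, hee, hne] using this
  rw [hx']
  refine Submodule.add_mem _ ?_ ?_
  · exact Submodule.mem_sup_left (by simp [hP])
  · exact Submodule.mem_sup_right (by simp [hQ])
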